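/- Let m ≥ 2 and let G be a graph containing no cycle of length 2m+1. If some vertex v of G has degree d(v) ≥ D, then α(G) ≥ D/(2m−1). -/

import Mathlib

open SimpleGraph

/-- `H` is contained in `G` as a subgraph (there is an injective adjacency-preserving map). -/
def ContainsCopy {α β : Type*} (H : SimpleGraph α) (G : SimpleGraph β) : Prop :=
  ∃ f : α ↪ β, ∀ u v, H.Adj u v → G.Adj (f u) (f v)

/-- The `k`-edge-coloring `c` of the complete graph on `Fin N` contains a monochromatic copy of `H`. -/
def HasMonoCopy {α : Type*} (H : SimpleGraph α) {N k : ℕ}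
    (c : Sym2 (Fin N) → Fin k) : Prop :=
  ∃ i : Fin k, ∃ f : α ↪ Fin N, ∀ u v, H.Adj u v → c s(f u, f v) = i

/-- The multicolor Ramsey number `r_k(H)`: the least `N` such that every `k`-coloring of the
edges of `K_N` contains a monochromatic copy of `H`. -/
noncomputable def multiRamsey {α : Type*} (H : SimpleGraph α) (k : ℕ) : ℕ :=
  sInf {N | ∀ c : Sym2 (Fin N) → Fin k, HasMonoCopy H c}

/-- The graph on `Fin N` formed by the edges of color `i`. -/
def colorGraph {N k : ℕ} (c : Sym2 (Fin N) → Fin k) (i : Fin k) : SimpleGraph (Fin N) where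
  Adj u v := u ≠ v ∧ c s(u, v) = i
  symm := ⟨by
    intro u v h
    exact ⟨h.1.symm, by rw [Sym2.eq_swap]; exact h.2⟩⟩
  loopless := ⟨fun u h => h.1 rfl⟩

/-- The independence number of a graph. -/
noncomputable def indepNum {V : Type*} (G : SimpleGraph V) : ℕ :=
  sSup {n | ∃ s : Finset V, s.card = n ∧ ∀ u ∈ s, ∀ v ∈ s, ¬ G.Adj u v}

section Aux

variable {V : Type*} [Fintype V] (G : SimpleGraph V)

/-- `f 0, …, f (l-1)` is a path in `G` with all vertices in `s`. -/
def IsPathOn (s : Finset V) (f : ℕ → V) (l : ℕ) : Prop :=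
  (∀ i, i < l → f i ∈ s) ∧ (∀ i j, i < l → j < l → f i = f j → i = j) ∧
    (∀ i, i + 1 < l → G.Adj (f i) (f (i + 1)))

/-- If every path in `s` has fewer than `k` vertices, there is an independent subset `t` of `s`
with `s.card ≤ (k-1) * t.card`. -/
lemma indep_of_no_path (k : ℕ) (hk : 1 ≤ k) :
    ∀ (n : ℕ) (s : Finset V), s.card ≤ n →
    (∀ f l, IsPathOn G s f l → l < k) →
    ∃ t : Finset V, t ⊆ s ∧ (∀ u ∈ t, ∀ w ∈ t, ¬ G.Adj u w) ∧ s.card ≤ (k - 1) * t.card := by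
  classical
  intro n
  induction n with
  | zero =>
    intro s hs _
    exact ⟨∅, Finset.empty_subset _, by simp, by simpa using Nat.le_zero.mp hs⟩
  | succ n ih =>
    intro s hs hnopath
    rcases s.eq_empty_or_nonempty with rfl | ⟨x, hx⟩
    · exact ⟨∅, Finset.empty_subset _, by simp, by simp⟩
    -- longest path in s
    set P : ℕ → Prop := fun l => ∃ f : ℕ → V, IsPathOn G s f l with hP
    have hP1 : P 1 := ⟨fun _ => x, fun i hi => hx, fun i j hi hj _ => by omega,
      fun i hi => absurd hi (by omega)⟩
    set L : ℕ := Nat.findGreatest P k with hL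
    have hL1 : 1 ≤ L := Nat.le_findGreatest hk hP1
    obtain ⟨f, hf⟩ : P L := Nat.findGreatest_spec hk hP1
    have hLk : L < k := hnopath f L hf
    -- all neighbors of the endpoint `u = f (L-1)` inside `s` are on the path
    set u : V := f (L - 1) with hu
    have hnbr : ∀ w ∈ s, G.Adj u w → ∃ i, i < L ∧ f i = w := by
      intro w hw hadj
      by_contra hcon
      push_neg at hcon
      have hPL1 : P (L + 1) := by
        refine ⟨fun i => if i < L then f i else w, ?_, ?_, ?_⟩
        · intro i hi
          by_cases h : i < L <;> simp [h, hf.1 i, hw]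
        · intro i j hi hj hij
          by_cases h1 : i < L <;> by_cases h2 : j < L <;> simp [h1, h2] at hij
          · exact hf.2.1 i j h1 h2 hij
          · exact absurd hij (hcon i h1)
          · exact absurd hij.symm (hcon j h2)
          · omega
        · intro i hi
          by_cases h : i + 1 < L
          · simpa [show i < L by omega, h] using hf.2.2 i h
          · have hiL : i = L - 1 := by omega
            subst hiL
            show G.Adj (if L - 1 < L then f (L - 1) else w)
              (if L - 1 + 1 < L then f (L - 1 + 1) else w)
            rw [if_pos (show L - 1 < L by omega), if_neg (show ¬ (L - 1 + 1 < L) by omega)]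
            exact hu ▸ hadj
      exact Nat.findGreatest_is_greatest (P := P) (n := k) (k := L + 1)
        (by omega) (by omega) hPL1
    -- remove the path vertices and recurse
    set R : Finset V := (Finset.range L).image f with hR
    have hRs : R ⊆ s := by
      intro y hy
      simp only [hR, Finset.mem_image, Finset.mem_range] at hy
      obtain ⟨i, hi, rfl⟩ := hy
      exact hf.1 i hi
    have huR : u ∈ R := by
      simp only [hR, Finset.mem_image, Finset.mem_range]
      exact ⟨L - 1, by omega, rfl⟩
    have hRcard : R.card ≤ L := (Finset.card_image_le).trans (by simp)
    have hRpos : 1 ≤ R.card := Finset.card_pos.mpr ⟨u, huR⟩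
    have hscard : (s \ R).card ≤ n := by
      have h1 : (s \ R).card = s.card - R.card := Finset.card_sdiff_of_subset hRs
      omega
    obtain ⟨t', ht'sub, ht'ind, ht'card⟩ := ih (s \ R) hscard (by
      intro g l hg
      refine hnopath g l ⟨fun i hi => (Finset.mem_sdiff.mp (hg.1 i hi)).1, hg.2.1, hg.2.2⟩)
    have hut' : u ∉ t' := fun h => (Finset.mem_sdiff.mp (ht'sub h)).2 huR
    refine ⟨insert u t', ?_, ?_, ?_⟩
    · intro y hy
      rcases Finset.mem_insert.mp hy with rfl | hy
      · exact hRs huR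
      · exact (Finset.mem_sdiff.mp (ht'sub hy)).1
    · intro a ha b hb hab
      rcases Finset.mem_insert.mp ha with rfl | ha <;> rcases Finset.mem_insert.mp hb with rfl | hb
      · exact G.loopless.irrefl _ hab
      · obtain ⟨i, hi, rfl⟩ := hnbr b (Finset.mem_sdiff.mp (ht'sub hb)).1 hab
        exact (Finset.mem_sdiff.mp (ht'sub hb)).2 (by
          simp only [hR, Finset.mem_image, Finset.mem_range]; exact ⟨i, hi, rfl⟩)
      · obtain ⟨i, hi, rfl⟩ := hnbr a (Finset.mem_sdiff.mp (ht'sub ha)).1 hab.symm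
        exact (Finset.mem_sdiff.mp (ht'sub ha)).2 (by
          simp only [hR, Finset.mem_image, Finset.mem_range]; exact ⟨i, hi, rfl⟩)
      · exact ht'ind a ha b hb hab
    · have h1 : s.card ≤ (s \ R).card + R.card := by
        have := Finset.card_sdiff_of_subset hRs
        have := Finset.card_le_card hRs
        omega
      have h2 : (insert u t').card = t'.card + 1 := Finset.card_insert_of_notMem hut'
      have : s.card ≤ (k - 1) * t'.card + (k - 1) := by omega
      rw [h2]; nlinarith [Nat.zero_le ((k-1) * t'.card)]

end Aux

theorem stmt7 (m : ℕ) (hm : 2 ≤ m) {V : Type*} [Fintype V]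
    (G : SimpleGraph V) [DecidableRel G.Adj]
    (hG : ¬ ContainsCopy (cycleGraph (2 * m + 1)) G)
    (v : V) (D : ℕ) (hv : D ≤ G.degree v) :
    (D : ℝ) / (2 * (m : ℝ) - 1) ≤ (_root_.indepNum G : ℝ) := by
  classical
  set s : Finset V := G.neighborFinset v with hs
  -- no path on 2m vertices inside the neighborhood of v
  have hnopath : ∀ f l, IsPathOn G s f l → l < 2 * m := by
    intro f l hf
    by_contra hcon
    push_neg at hcon
    -- build a copy of the (2m+1)-cycle
    apply hG
    set g : Fin (2 * m + 1) → V := fun i => if (i : ℕ) < 2 * m then f i else v with hg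
    have hfnbr : ∀ i, i < 2 * m → G.Adj v (f i) := fun i hi => by
      have := hf.1 i (by omega)
      rwa [hs, SimpleGraph.mem_neighborFinset] at this
    have hginj : Function.Injective g := by
      intro a b hab
      simp only [hg] at hab
      by_cases h1 : (a : ℕ) < 2 * m <;> by_cases h2 : (b : ℕ) < 2 * m <;>
        simp [h1, h2] at hab
      · exact Fin.ext (hf.2.1 a b (by omega) (by omega) hab)
      · exact absurd hab.symm (hfnbr a h1).ne
      · exact absurd hab (hfnbr b h2).ne
      · exact Fin.ext (by omega)
    have hstep : ∀ a b : Fin (2 * m + 1), b = a + 1 → G.Adj (g a) (g b) := by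
      intro a b hab
      have hbval : (b : ℕ) = ((a : ℕ) + 1) % (2 * m + 1) := by
        rw [hab]; simp [Fin.add_def, Nat.mod_eq_of_lt (show 1 < 2*m+1 by omega)]
      have ha' : (a : ℕ) < 2 * m + 1 := a.isLt
      by_cases h1 : (a : ℕ) < 2 * m
      · have hb' : (b : ℕ) = (a : ℕ) + 1 := by
          rw [hbval, Nat.mod_eq_of_lt (by omega)]
        by_cases h2 : (a : ℕ) + 1 < 2 * m
        · have := hf.2.2 a (by omega)
          simpa [hg, h1, hb', h2] using this
        · have hb2 : ¬ ((b : ℕ) < 2 * m) := by omega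
          simpa [hg, h1, hb2] using (hfnbr a h1).symm
      · have ha2 : (a : ℕ) = 2 * m := by omega
        have hb' : (b : ℕ) = 0 := by rw [hbval, ha2]; simp
        have hb2 : (b : ℕ) < 2 * m := by omega
        simpa [hg, h1, hb2, hb', show 0 < m by omega] using hfnbr 0 (by omega)
    refine ⟨⟨g, hginj⟩, fun a b hab => ?_⟩
    rw [cycleGraph_adj'] at hab
    have hone : ((1 : Fin (2 * m + 1)) : ℕ) = 1 := by
      simp [Fin.val_one, Nat.mod_eq_of_lt (show 1 < 2*m+1 by omega)]
    rcases hab with h | h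
    · have : a - b = 1 := Fin.ext (by rw [hone]; exact h)
      have : a = b + 1 := sub_eq_iff_eq_add'.mp this
      exact (hstep b a this).symm
    · have : b - a = 1 := Fin.ext (by rw [hone]; exact h)
      have : b = a + 1 := sub_eq_iff_eq_add'.mp this
      exact hstep a b this
  obtain ⟨t, hts, htind, htcard⟩ :=
    indep_of_no_path G (2 * m) (by omega) s.card s le_rfl hnopath
  -- t witnesses a lower bound on indepNum
  have htle : t.card ≤ _root_.indepNum G := by
    apply le_csSup
    · refine ⟨Fintype.card V, fun n hn => ?_⟩
      obtain ⟨w, hw, _⟩ := hn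
      rw [← hw]; exact Finset.card_le_univ w
    · exact ⟨t, rfl, htind⟩
  have hDt : D ≤ (2 * m - 1) * _root_.indepNum G := by
    have h1 : D ≤ s.card := by rwa [hs, SimpleGraph.card_neighborFinset_eq_degree]
    calc D ≤ (2 * m - 1) * t.card := le_trans h1 htcard
    _ ≤ (2 * m - 1) * _root_.indepNum G := Nat.mul_le_mul_left _ htle
  have hpos : (0 : ℝ) < 2 * (m : ℝ) - 1 := by
    have : (2 : ℝ) ≤ (m : ℝ) := by exact_mod_cast hm
    linarith
  rw [div_le_iff₀ hpos]
  have : (D : ℝ) ≤ ((2 * m - 1 : ℕ) : ℝ) * (_root_.indepNum G : ℝ) := by exact_mod_cast hDt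
  calc (D : ℝ) ≤ ((2 * m - 1 : ℕ) : ℝ) * (_root_.indepNum G : ℝ) := this
  _ = (_root_.indepNum G : ℝ) * (2 * (m : ℝ) - 1) := by
      have h1 : (1 : ℕ) ≤ 2 * m := by omega
      push_cast [h1]
      ring
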